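/- Let f : [0,1] → ℝ be continuous, concave, Lipschitz with constant L > 0, with f(0) = 0 = f(1). Let k, h > 0, α ∈ ℝ and Δ_R satisfy the CFL condition k·max(L, |α|) ≤ h/2 and h ≤ Δ_R ≤ 2h. Then for all a, b, c, κ ∈ [0,1]: (Δ_R − αk)·|H^{AC}_R(a,b,c) − κ| ≤ Δ_R·|b − κ| − k·[(h⁺(b∨κ, c∨κ) − h⁺(b∧κ, c∧κ)) − (h₀(a∨κ, b∨κ, α) − h₀(a∧κ, b∧κ, α))] + k·R_R(κ, α), where ∨ and ∧ denote max and min. (Discrete entropy inequality for the cell to the right of the interface, Case A.) -/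

import Mathlib

/-- Godunov numerical flux for the flux `+f`. -/
noncomputable def hplus (f : ℝ → ℝ) (a b : ℝ) : ℝ :=
  if a ≤ b then sInf (f '' Set.Icc a b) else sSup (f '' Set.Icc b a)

/-- Godunov-type interface flux along the interface of slope `α`. -/
noncomputable def h0flux (f : ℝ → ℝ) (a b α : ℝ) : ℝ :=
  -max (α * b - f b) 0 + max (-α * a - f a) 0

/-- Left remainder term `R_L`. -/
noncomputable def RL (f : ℝ → ℝ) (b α : ℝ) : ℝ :=
  min (max (α * b + f b) 0) (2 * f b)

/-- Right remainder term `R_R`. -/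
noncomputable def RR (f : ℝ → ℝ) (b α : ℝ) : ℝ :=
  2 * f b - RL f b α

/-- Right interface marching operator (Cases A, C). -/
noncomputable def HACR (f : ℝ → ℝ) (α k ΔR a b c : ℝ) : ℝ :=
  (ΔR * b - k * (hplus f b c - h0flux f a b α)) / (ΔR - α * k)

lemma concave_min_le {f : ℝ → ℝ} (hconc : ConcaveOn ℝ (Set.Icc 0 1) f)
    {a b x : ℝ} (ha : a ∈ Set.Icc (0:ℝ) 1) (hb : b ∈ Set.Icc (0:ℝ) 1)
    (hab : a ≤ b) (hx : x ∈ Set.Icc a b) : min (f a) (f b) ≤ f x := by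
  rcases eq_or_lt_of_le hab with rfl | hlt
  · have hxa : x = a := le_antisymm hx.2 hx.1
    simp [hxa]
  · set t : ℝ := (x - a) / (b - a) with ht
    have hba : (0:ℝ) < b - a := by linarith
    have ht0 : 0 ≤ t := div_nonneg (by linarith [hx.1]) hba.le
    have ht1 : t ≤ 1 := by rw [ht, div_le_one hba]; linarith [hx.2]
    have hxeq : (1 - t) * a + t * b = x := by
      rw [ht]; field_simp; ring
    have hcc := hconc.2 ha hb (by linarith : (0:ℝ) ≤ 1 - t) ht0 (by ring)
    simp only [smul_eq_mul] at hcc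
    rw [hxeq] at hcc
    have h1 : min (f a) (f b) ≤ f a := min_le_left _ _
    have h2 : min (f a) (f b) ≤ f b := min_le_right _ _
    nlinarith

lemma abs_A_le (x F : ℝ) (hF : 0 ≤ F) :
    |x - F - max (x - F) 0 + max (-x - F) 0| ≤ 2*F - min (max (x + F) 0) (2*F) := by
  rw [abs_le]
  rcases min_cases (max (x + F) 0) (2*F) with ⟨e4,i4⟩|⟨e4,i4⟩ <;>
  rcases max_cases (x + F) 0 with ⟨e3,i3⟩|⟨e3,i3⟩ <;>
  rcases max_cases (x - F) 0 with ⟨e1,i1⟩|⟨e1,i1⟩ <;>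
  rcases max_cases (-x - F) 0 with ⟨e2,i2⟩|⟨e2,i2⟩ <;>
  simp only [e3] at i4 e4 ⊢ <;> simp only [e4, e1, e2] <;> constructor <;> linarith

section Godunov

variable {f : ℝ → ℝ} (hconc : ConcaveOn ℝ (Set.Icc 0 1) f)
  {s : ℝ} (hs : s ∈ Set.Icc (0:ℝ) 1) (hsmax : ∀ x ∈ Set.Icc (0:ℝ) 1, f x ≤ f s)

include hconc hs hsmax

lemma fmono : ∀ x y : ℝ, 0 ≤ x → x ≤ y → y ≤ s → f x ≤ f y := by
  intro x y hx0 hxy hys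
  have hxI : x ∈ Set.Icc (0:ℝ) 1 := ⟨hx0, (hxy.trans hys).trans hs.2⟩
  have h := concave_min_le hconc hxI hs (hxy.trans hys) ⟨hxy, hys⟩
  rwa [min_eq_left (hsmax x hxI)] at h

lemma fanti : ∀ x y : ℝ, s ≤ x → x ≤ y → y ≤ 1 → f y ≤ f x := by
  intro x y hsx hxy hy1
  have hyI : y ∈ Set.Icc (0:ℝ) 1 := ⟨hs.1.trans (hsx.trans hxy), hy1⟩
  have h := concave_min_le hconc hs hyI (hsx.trans hxy) ⟨hsx, hxy⟩
  rwa [min_eq_right (hsmax y hyI)] at h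

lemma hplus_eq : ∀ b ∈ Set.Icc (0:ℝ) 1, ∀ c ∈ Set.Icc (0:ℝ) 1,
    hplus f b c = min (f (min b s)) (f (max c s)) := by
  intro b hb c hc
  unfold hplus
  split_ifs with hbc
  · have hIs : sInf (f '' Set.Icc b c) = min (f b) (f c) := by
      apply IsLeast.csInf_eq
      constructor
      · rcases le_total (f b) (f c) with hfb | hfb
        · exact ⟨b, ⟨le_refl b, hbc⟩, (min_eq_left hfb).symm⟩
        · exact ⟨c, ⟨hbc, le_refl c⟩, (min_eq_right hfb).symm⟩
      · rintro y ⟨x, hx, rfl⟩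
        exact concave_min_le hconc hb hc hbc hx
    rw [hIs]
    rcases le_total b s with h1 | h1
    · rw [min_eq_left h1]
      rcases le_total c s with h2 | h2
      · rw [max_eq_right h2]
        have hbc' : f b ≤ f c := fmono hconc hs hsmax b c hb.1 hbc h2
        have hcs : f c ≤ f s := fmono hconc hs hsmax c s hc.1 h2 le_rfl
        rw [min_eq_left hbc', min_eq_left (hbc'.trans hcs)]
      · rw [max_eq_left h2]
    · rw [min_eq_right h1, max_eq_left (h1.trans hbc)]
      have h1' : f b ≤ f s := fanti hconc hs hsmax s b le_rfl h1 hb.2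
      have h2' : f c ≤ f b := fanti hconc hs hsmax b c h1 hbc hc.2
      rw [min_eq_right h2', min_eq_right (h2'.trans h1')]
  · push_neg at hbc
    have hcb : c ≤ b := hbc.le
    set m := max c (min s b) with hm
    have hm1 : c ≤ m := le_max_left _ _
    have hm2 : m ≤ b := max_le hcb (min_le_right s b)
    have hSup : sSup (f '' Set.Icc c b) = f m := by
      apply IsGreatest.csSup_eq
      constructor
      · exact ⟨m, ⟨hm1, hm2⟩, rfl⟩
      · rintro y ⟨x, hx, rfl⟩
        rcases le_total x s with hxs | hxs
        · have hxm : x ≤ m := le_trans (le_min hxs hx.2) (le_max_right _ _)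
          have hms : m ≤ s := max_le (hx.1.trans hxs) (min_le_left _ _)
          exact fmono hconc hs hsmax x m (hc.1.trans hx.1) hxm hms
        · have hsm : s ≤ m := le_trans (le_min le_rfl (hxs.trans hx.2)) (le_max_right _ _)
          have hmx : m ≤ x := max_le hx.1 ((min_le_left s b).trans hxs)
          exact fanti hconc hs hsmax m x hsm hmx (hx.2.trans hb.2)
    rw [hSup]
    rcases le_total s c with h1 | h1
    · have hmc : m = c := by
        rw [hm, min_eq_left (h1.trans hcb), max_eq_left h1]
      rw [hmc, min_eq_right (h1.trans hcb), max_eq_left h1]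
      rw [min_eq_right (fanti hconc hs hsmax s c le_rfl h1 hc.2)]
    · rcases le_total b s with h2 | h2
      · have hmb : m = b := by rw [hm, min_eq_right h2, max_eq_right hcb]
        rw [hmb, min_eq_left h2, max_eq_right h1]
        rw [min_eq_left (fmono hconc hs hsmax b s hb.1 h2 le_rfl)]
      · have hms : m = s := by rw [hm, min_eq_left h2, max_eq_right h1]
        rw [hms, min_eq_right h2, max_eq_right h1, min_self]

end Godunov

/-- Discrete entropy inequality for the cell to the right of the interface (Case A). -/
theorem stmt_19
    (f : ℝ → ℝ)
    (hcont : ContinuousOn f (Set.Icc 0 1))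
    (hconc : ConcaveOn ℝ (Set.Icc 0 1) f)
    (L : ℝ) (hL : 0 < L)
    (hlip : ∀ x ∈ Set.Icc (0:ℝ) 1, ∀ y ∈ Set.Icc (0:ℝ) 1, |f x - f y| ≤ L * |x - y|)
    (hf0 : f 0 = 0) (hf1 : f 1 = 0)
    (k h α ΔR : ℝ) (hk : 0 < k) (hh : 0 < h)
    (hCFL : k * max L |α| ≤ h / 2)
    (hΔR : h ≤ ΔR ∧ ΔR ≤ 2 * h) :
    ∀ a b c κ : ℝ, a ∈ Set.Icc (0:ℝ) 1 → b ∈ Set.Icc (0:ℝ) 1 →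
      c ∈ Set.Icc (0:ℝ) 1 → κ ∈ Set.Icc (0:ℝ) 1 →
      (ΔR - α * k) * |HACR f α k ΔR a b c - κ| ≤ ΔR * |b - κ| -
        k * ((hplus f (b ⊔ κ) (c ⊔ κ) - hplus f (b ⊓ κ) (c ⊓ κ)) -
             (h0flux f (a ⊔ κ) (b ⊔ κ) α - h0flux f (a ⊓ κ) (b ⊓ κ) α)) +
        k * RR f κ α := by
  intro a b c κ ha hb hc hκ
  obtain ⟨s, hsmem, hsmax'⟩ :=
    isCompact_Icc.exists_isMaxOn (Set.nonempty_Icc.2 zero_le_one) hcont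
  have hsmax : ∀ x ∈ Set.Icc (0:ℝ) 1, f x ≤ f s := fun x hx => hsmax' hx
  -- numeric facts
  have hk0 : (0:ℝ) ≤ k := hk.le
  have hL0 : (0:ℝ) ≤ L := hL.le
  have hkL : k * L ≤ h/2 :=
    le_trans (mul_le_mul_of_nonneg_left (le_max_left L |α|) hk0) hCFL
  have hkα : k * |α| ≤ h/2 :=
    le_trans (mul_le_mul_of_nonneg_left (le_max_right L |α|) hk0) hCFL
  have hΔpos : 0 < ΔR - α*k := by
    have h1 : α*k ≤ |α| * k := mul_le_mul_of_nonneg_right (le_abs_self α) hk0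
    have h2 : |α| * k = k*|α| := mul_comm _ _
    linarith [hΔR.1]
  have hkLα : k*(L+|α|) ≤ ΔR := by rw [mul_add]; linarith [hΔR.1]
  -- monotonicity in the `a` slot
  have mono_a : ∀ a₁ ∈ Set.Icc (0:ℝ) 1, ∀ a₂ ∈ Set.Icc (0:ℝ) 1, a₁ ≤ a₂ →
      max (-α*a₁ - f a₁) 0 ≤ max (-α*a₂ - f a₂) 0 := by
    intro a₁ h₁ a₂ h₂ h12
    rcases eq_or_lt_of_le (h₁.1.trans h12) with h0 | h0
    · have ha₁ : a₁ = 0 := le_antisymm (h12.trans h0.symm.le) h₁.1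
      rw [ha₁, ← h0]
    · set t := a₁ / a₂ with htdef
      have ht0 : 0 ≤ t := div_nonneg h₁.1 (le_of_lt h0)
      have ht1 : t ≤ 1 := by rw [htdef, div_le_one h0]; exact h12
      have hta : t * a₂ = a₁ := by rw [htdef]; field_simp
      have hcc := hconc.2 (show (0:ℝ) ∈ Set.Icc (0:ℝ) 1 from ⟨le_rfl, zero_le_one⟩)
        h₂ (by linarith : (0:ℝ) ≤ 1 - t) ht0 (by ring)
      simp only [smul_eq_mul, mul_zero, zero_add] at hcc
      rw [hta, hf0, mul_zero, zero_add] at hcc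
      have hexp : t * (-α*a₂ - f a₂) = -α*a₁ - t * f a₂ := by rw [← hta]; ring
      have key : -α*a₁ - f a₁ ≤ t * (-α*a₂ - f a₂) := by rw [hexp]; linarith
      have key2 : t * (-α*a₂ - f a₂) ≤ max (-α*a₂ - f a₂) 0 := by
        rcases le_total (-α*a₂ - f a₂) 0 with hneg | hpos
        · exact le_trans (mul_nonpos_of_nonneg_of_nonpos ht0 hneg) (le_max_right _ _)
        · have h' : t * (-α*a₂ - f a₂) ≤ 1 * (-α*a₂ - f a₂) :=
            mul_le_mul_of_nonneg_right ht1 hpos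
          rw [one_mul] at h'
          exact h'.trans (le_max_left _ _)
      exact max_le (key.trans key2) (le_max_right _ _)
  -- monotonicity in the `c` slot
  have mono_c : ∀ bb ∈ Set.Icc (0:ℝ) 1, ∀ c₁ ∈ Set.Icc (0:ℝ) 1, ∀ c₂ ∈ Set.Icc (0:ℝ) 1,
      c₁ ≤ c₂ → hplus f bb c₂ ≤ hplus f bb c₁ := by
    intro bb hbb c₁ h₁ c₂ h₂ h12
    rw [hplus_eq hconc hsmem hsmax bb hbb c₁ h₁,
        hplus_eq hconc hsmem hsmax bb hbb c₂ h₂]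
    exact min_le_min le_rfl
      (fanti hconc hsmem hsmax (max c₁ s) (max c₂ s) (le_max_right _ _)
        (max_le_max h12 le_rfl) (max_le h₂.2 hsmem.2))
  -- key estimate in the `b` slot
  have key_b : ∀ b₁ ∈ Set.Icc (0:ℝ) 1, ∀ b₂ ∈ Set.Icc (0:ℝ) 1, ∀ cc ∈ Set.Icc (0:ℝ) 1,
      b₁ ≤ b₂ →
      (hplus f b₂ cc + max (α*b₂ - f b₂) 0) - (hplus f b₁ cc + max (α*b₁ - f b₁) 0)
        ≤ (L + |α|)*(b₂ - b₁) := by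
    intro b₁ h₁ b₂ h₂ cc hcc h12
    rw [hplus_eq hconc hsmem hsmax b₁ h₁ cc hcc,
        hplus_eq hconc hsmem hsmax b₂ h₂ cc hcc]
    have hd : (0:ℝ) ≤ b₂ - b₁ := by linarith
    have hUmono : f (min b₁ s) ≤ f (min b₂ s) :=
      fmono hconc hsmem hsmax (min b₁ s) (min b₂ s) (le_min h₁.1 hsmem.1)
        (min_le_min h12 le_rfl) (min_le_right _ _)
    have hmin : min (f (min b₂ s)) (f (max cc s)) - min (f (min b₁ s)) (f (max cc s))
        ≤ f (min b₂ s) - f (min b₁ s) := by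
      rcases le_total (f (min b₁ s)) (f (max cc s)) with hdd | hdd
      · rw [min_eq_left hdd]
        linarith [min_le_left (f (min b₂ s)) (f (max cc s))]
      · rw [min_eq_right hdd]
        linarith [min_le_right (f (min b₂ s)) (f (max cc s))]
    have hG : max (α*b₂ - f b₂) 0 - max (α*b₁ - f b₁) 0
        ≤ max (α*(b₂-b₁) - (f b₂ - f b₁)) 0 := by
      rcases max_cases (α*b₂ - f b₂) 0 with ⟨e,_⟩|⟨e,_⟩ <;> rw [e] <;>
        linarith [le_max_left (α*(b₂-b₁) - (f b₂ - f b₁)) 0,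
          le_max_right (α*(b₂-b₁) - (f b₂ - f b₁)) 0,
          le_max_left (α*b₁ - f b₁) 0, le_max_right (α*b₁ - f b₁) 0]
    have hcore : (f (min b₂ s) - f (min b₁ s)) + max (α*(b₂-b₁) - (f b₂ - f b₁)) 0
        ≤ (L + |α|)*(b₂-b₁) := by
      have habs : 0 ≤ |α| * (b₂ - b₁) := mul_nonneg (abs_nonneg α) hd
      rcases le_total (α*(b₂-b₁) - (f b₂ - f b₁)) 0 with hM | hM
      · rw [max_eq_right hM]
        have hU : f (min b₂ s) - f (min b₁ s) ≤ L * (b₂ - b₁) := by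
          rcases le_total b₂ s with h2 | h2
          · rw [min_eq_left h2, min_eq_left (h12.trans h2)]
            have l1 := hlip b₂ h₂ b₁ h₁
            rw [abs_of_nonneg hd] at l1
            linarith [le_abs_self (f b₂ - f b₁)]
          · rcases le_total b₁ s with h1 | h1
            · rw [min_eq_right h2, min_eq_left h1]
              have l1 := hlip s hsmem b₁ h₁
              rw [abs_of_nonneg (sub_nonneg.2 h1)] at l1
              have l2 : L*(s-b₁) ≤ L*(b₂-b₁) :=
                mul_le_mul_of_nonneg_left (by linarith) hL0
              linarith [le_abs_self (f s - f b₁)]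
            · rw [min_eq_right h2, min_eq_right h1]
              have : 0 ≤ L*(b₂-b₁) := mul_nonneg hL0 hd
              linarith
        nlinarith
      · rw [max_eq_left hM]
        have hα' : α*(b₂-b₁) ≤ |α| * (b₂-b₁) :=
          mul_le_mul_of_nonneg_right (le_abs_self α) hd
        have hU2 : f (min b₂ s) - f (min b₁ s) - (f b₂ - f b₁) ≤ L * (b₂ - b₁) := by
          rcases le_total b₂ s with h2 | h2
          · rw [min_eq_left h2, min_eq_left (h12.trans h2)]
            have : 0 ≤ L*(b₂-b₁) := mul_nonneg hL0 hd
            linarith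
          · rcases le_total b₁ s with h1 | h1
            · rw [min_eq_right h2, min_eq_left h1]
              have l1 := hlip s hsmem b₂ h₂
              rw [abs_of_nonpos (by linarith : s - b₂ ≤ 0)] at l1
              have l2 : L*(-(s-b₂)) ≤ L*(b₂-b₁) :=
                mul_le_mul_of_nonneg_left (by linarith) hL0
              linarith [le_abs_self (f s - f b₂)]
            · rw [min_eq_right h2, min_eq_right h1]
              have l1 := hlip b₁ h₁ b₂ h₂
              rw [abs_of_nonpos (by linarith : b₁ - b₂ ≤ 0)] at l1
              linarith [le_abs_self (f b₁ - f b₂)]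
        nlinarith
    linarith
  -- full monotonicity of the scheme numerator
  have Nmono : ∀ x₁ y₁ z₁ x₂ y₂ z₂ : ℝ, x₁ ∈ Set.Icc (0:ℝ) 1 → y₁ ∈ Set.Icc (0:ℝ) 1 →
      z₁ ∈ Set.Icc (0:ℝ) 1 → x₂ ∈ Set.Icc (0:ℝ) 1 → y₂ ∈ Set.Icc (0:ℝ) 1 →
      z₂ ∈ Set.Icc (0:ℝ) 1 → x₁ ≤ x₂ → y₁ ≤ y₂ → z₁ ≤ z₂ →
      ΔR * y₁ - k * (hplus f y₁ z₁ - h0flux f x₁ y₁ α)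
        ≤ ΔR * y₂ - k * (hplus f y₂ z₂ - h0flux f x₂ y₂ α) := by
    intro x₁ y₁ z₁ x₂ y₂ z₂ hx₁ hy₁ hz₁ hx₂ hy₂ hz₂ hxx hyy hzz
    have hA := mono_a x₁ hx₁ x₂ hx₂ hxx
    have hC := mono_c y₂ hy₂ z₁ hz₁ z₂ hz₂ hzz
    have hB := key_b y₁ hy₁ y₂ hy₂ z₁ hz₁ hyy
    have hB' : k * ((hplus f y₂ z₁ + max (α*y₂ - f y₂) 0)
          - (hplus f y₁ z₁ + max (α*y₁ - f y₁) 0)) ≤ ΔR * (y₂ - y₁) := by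
      have h1 := mul_le_mul_of_nonneg_left hB hk0
      have h2 : k * ((L + |α|) * (y₂ - y₁)) ≤ ΔR * (y₂ - y₁) := by
        have h3 := mul_le_mul_of_nonneg_right hkLα (sub_nonneg.2 hyy)
        calc k * ((L + |α|) * (y₂ - y₁)) = k * (L + |α|) * (y₂ - y₁) := by ring
          _ ≤ ΔR * (y₂ - y₁) := h3
      linarith
    have hA' := mul_le_mul_of_nonneg_left hA hk0
    have hC' := mul_le_mul_of_nonneg_left hC hk0
    unfold h0flux
    linarith
  -- memberships
  have hmemI : ∀ x y : ℝ, x ∈ Set.Icc (0:ℝ) 1 → y ∈ Set.Icc (0:ℝ) 1 →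
      x ⊓ y ∈ Set.Icc (0:ℝ) 1 := fun x y hx hy =>
    ⟨le_min hx.1 hy.1, (min_le_left x y).trans hx.2⟩
  have hmemS : ∀ x y : ℝ, x ∈ Set.Icc (0:ℝ) 1 → y ∈ Set.Icc (0:ℝ) 1 →
      x ⊔ y ∈ Set.Icc (0:ℝ) 1 := fun x y hx hy =>
    ⟨hx.1.trans (le_max_left x y), max_le hx.2 hy.2⟩
  have haκI := hmemI a κ ha hκ
  have hbκI := hmemI b κ hb hκ
  have hcκI := hmemI c κ hc hκ
  have haκS := hmemS a κ ha hκ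
  have hbκS := hmemS b κ hb hκ
  have hcκS := hmemS c κ hc hκ
  -- the four monotonicity instances
  have h1 := Nmono (a⊓κ) (b⊓κ) (c⊓κ) a b c haκI hbκI hcκI ha hb hc
    inf_le_left inf_le_left inf_le_left
  have h2 := Nmono a b c (a⊔κ) (b⊔κ) (c⊔κ) ha hb hc haκS hbκS hcκS
    le_sup_left le_sup_left le_sup_left
  have h3 := Nmono (a⊓κ) (b⊓κ) (c⊓κ) κ κ κ haκI hbκI hcκI hκ hκ hκ
    inf_le_right inf_le_right inf_le_right
  have h4 := Nmono κ κ κ (a⊔κ) (b⊔κ) (c⊔κ) hκ hκ hκ haκS hbκS hcκS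
    le_sup_right le_sup_right le_sup_right
  -- central estimate
  have hκ0 : 0 ≤ f κ := by
    have h' := concave_min_le hconc (show (0:ℝ) ∈ Set.Icc (0:ℝ) 1 from ⟨le_rfl, zero_le_one⟩)
      (show (1:ℝ) ∈ Set.Icc (0:ℝ) 1 from ⟨zero_le_one, le_rfl⟩) zero_le_one hκ
    rwa [hf0, hf1, min_self] at h'
  have hplusκ : hplus f κ κ = f κ := by
    unfold hplus
    rw [if_pos le_rfl, Set.Icc_self, Set.image_singleton, csInf_singleton]
  have hcent : |(ΔR * κ - k * (hplus f κ κ - h0flux f κ κ α)) - (ΔR - α*k)*κ|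
      ≤ k * RR f κ α := by
    rw [hplusκ]
    unfold h0flux RR RL
    have hA := abs_A_le (α*κ) (f κ) hκ0
    have heq : (ΔR * κ - k * (f κ - (-max (α * κ - f κ) 0 + max (-α * κ - f κ) 0)))
        - (ΔR - α*k)*κ
        = k * (α*κ - f κ - max (α * κ - f κ) 0 + max (-(α * κ) - f κ) 0) := by
      rw [neg_mul]; ring
    rw [heq, abs_mul, abs_of_pos hk]
    exact mul_le_mul_of_nonneg_left hA hk0
  obtain ⟨hc1, hc2⟩ := abs_le.mp hcent
  -- identity for the telescoped difference
  have hident : (ΔR * (b⊔κ) - k * (hplus f (b⊔κ) (c⊔κ) - h0flux f (a⊔κ) (b⊔κ) α))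
      - (ΔR * (b⊓κ) - k * (hplus f (b⊓κ) (c⊓κ) - h0flux f (a⊓κ) (b⊓κ) α))
      = ΔR * |b - κ| -
        k * ((hplus f (b ⊔ κ) (c ⊔ κ) - hplus f (b ⊓ κ) (c ⊓ κ)) -
             (h0flux f (a ⊔ κ) (b ⊔ κ) α - h0flux f (a ⊓ κ) (b ⊓ κ) α)) := by
    have habs : |b - κ| = b ⊔ κ - b ⊓ κ := by
      rcases le_total b κ with hbk | hbk
      · rw [abs_of_nonpos (by linarith), sup_eq_right.2 hbk, inf_eq_left.2 hbk]; ring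
      · rw [abs_of_nonneg (by linarith), sup_eq_left.2 hbk, inf_eq_right.2 hbk]
    rw [habs]
    ring
  -- rewrite the left-hand side
  have hne : ΔR - α*k ≠ 0 := ne_of_gt hΔpos
  have hHrw : (ΔR - α * k) * |HACR f α k ΔR a b c - κ|
      = |(ΔR * b - k * (hplus f b c - h0flux f a b α)) - (ΔR - α*k)*κ| := by
    have hval : HACR f α k ΔR a b c - κ
        = ((ΔR * b - k * (hplus f b c - h0flux f a b α)) - (ΔR - α*k)*κ) / (ΔR - α*k) := by
      unfold HACR
      rw [eq_div_iff hne, sub_mul, div_mul_cancel₀ _ hne]; ring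
    rw [hval, abs_div, abs_of_pos hΔpos, mul_comm, div_mul_cancel₀ _ hne]
  rw [hHrw, abs_le] at *
  constructor <;> linarith
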